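/- The monotone fragment CPC↾_{∧,∨,⊤,⊥} of classical logic conservatively translates into LP: for the substitution σ with σ(p) = p ∧ ¬p for every variable p, we have Γ ⊢_{CPC} φ iff σ(Γ) ⊢_{LP} σ(φ), for all Γ, φ built from ∧, ∨, ⊤, ⊥. -/

import Mathlib

/-- Formulas in the connectives `∧, ∨, ¬, ⊤, ⊥` (a functionally complete set for CPC). -/
inductive KForm : Type
  | var : ℕ → KForm
  | bot : KForm
  | top : KForm
  | neg : KForm → KForm
  | and : KForm → KForm → KForm
  | or : KForm → KForm → KForm
  deriving DecidableEq

/-- Boolean evaluation. -/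
def KForm.evalB (v : ℕ → Bool) : KForm → Bool
  | .var n => v n
  | .bot => false
  | .top => true
  | .neg φ => !(φ.evalB v)
  | .and φ ψ => φ.evalB v && ψ.evalB v
  | .or φ ψ => φ.evalB v || ψ.evalB v

/-- The three truth values 0, *, 1 of the Kleene algebra A3. -/
inductive K3 : Type
  | zero : K3
  | half : K3
  | one : K3
  deriving DecidableEq

/-- The truth order 0 < * < 1 as natural numbers. -/
def K3.toNat : K3 → ℕ
  | .zero => 0
  | .half => 1
  | .one => 2

/-- Meet (min) in the truth order. -/
def K3.min (a b : K3) : K3 := if a.toNat ≤ b.toNat then a else b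

/-- Join (max) in the truth order. -/
def K3.max (a b : K3) : K3 := if a.toNat ≤ b.toNat then b else a

/-- Kleene negation. -/
def K3.not : K3 → K3
  | .zero => .one
  | .half => .half
  | .one => .zero

/-- Evaluation in the Kleene algebra A3. -/
def KForm.eval3 (v : ℕ → K3) : KForm → K3
  | .var n => v n
  | .bot => .zero
  | .top => .one
  | .neg φ => (φ.eval3 v).not
  | .and φ ψ => (φ.eval3 v).min (ψ.eval3 v)
  | .or φ ψ => (φ.eval3 v).max (ψ.eval3 v)

/-- Classical consequence (over the language `∧, ∨, ¬, ⊤, ⊥`). -/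
def CpcK (Γ : Set KForm) (φ : KForm) : Prop :=
  ∀ v : ℕ → Bool, (∀ ψ ∈ Γ, ψ.evalB v = true) → φ.evalB v = true

/-- Kleene's 3-valued logic: only `1` is designated. -/
def KleeneK (Γ : Set KForm) (φ : KForm) : Prop :=
  ∀ v : ℕ → K3, (∀ ψ ∈ Γ, ψ.eval3 v = .one) → φ.eval3 v = .one

/-- The logic of paradox LP: both `*` and `1` are designated. -/
def LPK (Γ : Set KForm) (φ : KForm) : Prop :=
  ∀ v : ℕ → K3, (∀ ψ ∈ Γ, ψ.eval3 v ≠ .zero) → φ.eval3 v ≠ .zero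

/-- A formula is monotone if it is built only from variables, `∧`, `∨`, `⊤`, `⊥`. -/
def KForm.IsMonotone : KForm → Prop
  | .var _ => True
  | .bot => True
  | .top => True
  | .neg _ => False
  | .and φ ψ => φ.IsMonotone ∧ ψ.IsMonotone
  | .or φ ψ => φ.IsMonotone ∧ ψ.IsMonotone

/-- The substitution `σ` replacing every variable `p` by `p ∧ ¬p`. -/
def sigma : KForm → KForm
  | .var n => .and (.var n) (.neg (.var n))
  | .bot => .bot
  | .top => .top
  | .neg φ => .neg (sigma φ)
  | .and φ ψ => .and (sigma φ) (sigma ψ)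
  | .or φ ψ => .or (sigma φ) (sigma ψ)

/-- The monotone fragment `CPC↾_{∧,∨,⊤,⊥}` conservatively translates into LP via the
substitution `σ(p) = p ∧ ¬p`: for monotone `Γ, φ`, `Γ ⊢_CPC φ` iff `σ(Γ) ⊢_LP σ(φ)`. -/

lemma k3_min_eq_zero (a b : K3) : a.min b = K3.zero ↔ a = K3.zero ∨ b = K3.zero := by
  cases a <;> cases b <;> decide

lemma k3_max_eq_zero (a b : K3) : a.max b = K3.zero ↔ a = K3.zero ∧ b = K3.zero := by
  cases a <;> cases b <;> decide

lemma sig_var (a : K3) : a.min a.not = K3.zero ↔ ¬ (a = K3.half) := by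
  cases a <;> decide

lemma key_lemma (ψ : KForm) (hm : ψ.IsMonotone) (u : ℕ → K3) :
    (sigma ψ).eval3 u ≠ K3.zero ↔ ψ.evalB (fun p => decide (u p = K3.half)) = true := by
  induction ψ with
  | var n =>
      simp [sigma, KForm.eval3, KForm.evalB, sig_var]
  | bot => simp [sigma, KForm.eval3, KForm.evalB]
  | top => simp only [sigma, KForm.eval3, KForm.evalB]; decide
  | neg φ ih => exact absurd hm not_false
  | and φ χ ih1 ih2 =>
      obtain ⟨h1, h2⟩ := hm
      simp only [sigma, KForm.eval3, KForm.evalB, k3_min_eq_zero, not_or,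
        Bool.and_eq_true, ne_eq]
      rw [← ih1 h1, ← ih2 h2]
  | or φ χ ih1 ih2 =>
      obtain ⟨h1, h2⟩ := hm
      simp only [sigma, KForm.eval3, KForm.evalB, k3_max_eq_zero, not_and_or,
        Bool.or_eq_true, ne_eq]
      rw [← ih1 h1, ← ih2 h2]

theorem monotone_fragment_into_LP (Γ : Set KForm) (φ : KForm)
    (hΓ : ∀ ψ ∈ Γ, ψ.IsMonotone) (hφ : φ.IsMonotone) :
    CpcK Γ φ ↔ LPK (sigma '' Γ) (sigma φ) := by
  constructor
  · intro h u hu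
    have hv := h (fun p => decide (u p = K3.half)) (fun ψ hψ => by
      exact (key_lemma ψ (hΓ ψ hψ) u).mp (hu (sigma ψ) ⟨ψ, hψ, rfl⟩))
    exact (key_lemma φ hφ u).mpr (by simpa using hv)
  · intro h v hv
    set u : ℕ → K3 := fun p => if v p then K3.half else K3.zero with hu
    have huv : (fun p => decide (u p = K3.half)) = v := by
      funext p; show decide ((if v p = true then K3.half else K3.zero) = K3.half) = v p
      cases v p <;> simp
    have hd := h u (by
      rintro _ ⟨ψ, hψ, rfl⟩
      rw [key_lemma ψ (hΓ ψ hψ) u, huv]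
      exact hv ψ hψ)
    have := (key_lemma φ hφ u).mp hd
    rwa [huv] at this
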